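/- Let k be a positive integer with k < rank(T). Then the image of K_T is all of U, i.e., the K-linear span of the vectors K_T(f₁,…,f_k; v₁,…,v_{k+1}) over all choices of f₁,…,f_k ∈ V* and v₁,…,v_{k+1} ∈ U equals U. -/

import Mathlib

open Finset

/-- The map `K_T` from the paper: for `f₁,…,f_k ∈ V*` and `v₁,…,v_{k+1} ∈ U`,
`K_T(f₁,…,f_k; v₁,…,v_{k+1}) = Σ_{σ ∈ S_{k+1}} sign(σ) · Π_i f_i(T(v_{σ(i)})) · v_{σ(k+1)}`. -/
noncomputable def paperKT {K U V : Type*} [Field K] [AddCommGroup U] [Module K U]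
    [AddCommGroup V] [Module K V] (T : U →ₗ[K] V) (k : ℕ)
    (f : Fin k → (V →ₗ[K] K)) (v : Fin (k + 1) → U) : U :=
  ∑ σ : Equiv.Perm (Fin (k + 1)),
    ((Equiv.Perm.sign σ : ℤ) : K) •
      (∏ i : Fin k, f i (T (v (σ i.castSucc)))) • v (σ (Fin.last k))

/-- A linearly independent family has a "dual family" of functionals. -/
theorem exists_dual_family {K V : Type*} [Field K] [AddCommGroup V] [Module K V]
    {m : ℕ} {y : Fin m → V} (h : LinearIndependent K y) :
    ∃ f : Fin m → (V →ₗ[K] K), ∀ i j, f i (y j) = if i = j then 1 else 0 := by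
  classical
  have h' := (linearIndepOn_id_range_iff h.injective).mpr h
  let b := Module.Basis.extend h'
  have hsub : Set.range y ⊆ h'.extend (Set.subset_univ _) := h'.subset_extend _
  refine ⟨fun i => b.coord ⟨y i, hsub (Set.mem_range_self i)⟩, fun i j => ?_⟩
  have hyj : y j = b ⟨y j, hsub (Set.mem_range_self j)⟩ :=
    (Module.Basis.extend_apply_self h' ⟨y j, hsub (Set.mem_range_self j)⟩).symm
  rw [Module.Basis.coord_apply, hyj, Module.Basis.repr_self, Finsupp.single_apply]
  by_cases hij : i = j
  · subst hij; simp
  · rw [if_neg hij, if_neg]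
    intro he
    exact hij (h.injective (congrArg Subtype.val he)).symm

/-- The key computation: if the `f i` are dual to the `T (v j)` and kill `T w`,
then `K_T(f; v₁,…,v_k, w) = w`. -/
theorem paperKT_snoc_eq {K U V : Type*} [Field K] [AddCommGroup U] [Module K U]
    [AddCommGroup V] [Module K V] (T : U →ₗ[K] V) {k : ℕ}
    (f : Fin k → (V →ₗ[K] K)) (v : Fin k → U) (w : U)
    (hf : ∀ i j, f i (T (v j)) = if i = j then 1 else 0)
    (hw : ∀ i, f i (T w) = 0) :
    paperKT T k f (Fin.snoc v w) = w := by
  unfold paperKT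
  rw [Fintype.sum_eq_single (1 : Equiv.Perm (Fin (k + 1)))]
  · have hprod : (∏ i : Fin k,
        f i (T ((Fin.snoc v w : Fin (k+1) → U) ((1 : Equiv.Perm (Fin (k+1))) i.castSucc)))) = 1 := by
      apply Finset.prod_eq_one
      intro i _
      simp [Fin.snoc_castSucc, hf i i]
    rw [hprod]
    simp [Fin.snoc_last]
  · intro σ hσ
    have hprod : (∏ i : Fin k,
        f i (T ((Fin.snoc v w : Fin (k+1) → U) (σ i.castSucc)))) = 0 := by
      by_cases hl : σ (Fin.last k) = Fin.last k
      · have hex : ∃ a, σ a ≠ a := by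
          by_contra hc
          push_neg at hc
          exact hσ (Equiv.ext hc)
        obtain ⟨a, ha⟩ := hex
        have hane : a ≠ Fin.last k := fun he => ha (he ▸ hl)
        obtain ⟨i, rfl⟩ := Fin.exists_castSucc_eq.mpr hane
        have hne_last : σ i.castSucc ≠ Fin.last k := by
          intro he
          exact hane (σ.injective (he.trans hl.symm))
        obtain ⟨j, hj⟩ := Fin.exists_castSucc_eq.mpr hne_last
        refine Finset.prod_eq_zero (Finset.mem_univ i) ?_
        rw [← hj, Fin.snoc_castSucc, hf i j, if_neg]
        intro he
        exact ha (by rw [← hj, he])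
      · set a := σ⁻¹ (Fin.last k) with hadef
        have hane : a ≠ Fin.last k := by
          intro he
          apply hl
          have : σ a = Fin.last k := Equiv.apply_symm_apply σ _
          rw [he] at this
          exact this
        obtain ⟨i, hi⟩ := Fin.exists_castSucc_eq.mpr hane
        refine Finset.prod_eq_zero (Finset.mem_univ i) ?_
        have : σ i.castSucc = Fin.last k := by
          rw [hi, hadef]; exact Equiv.apply_symm_apply σ _
        rw [this, Fin.snoc_last, hw i]
    rw [hprod]
    simp

/-- Existence of a family `v` and dual functionals killing `T w`. -/
theorem exists_adapted {K U V : Type*} [Field K]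
    [AddCommGroup U] [Module K U]
    [AddCommGroup V] [Module K V] [FiniteDimensional K V]
    (T : U →ₗ[K] V) (k : ℕ)
    (hlt : k < Module.finrank K (LinearMap.range T)) (w : U) :
    ∃ (v : Fin k → U) (f : Fin k → (V →ₗ[K] K)),
      (∀ i j, f i (T (v j)) = if i = j then 1 else 0) ∧ ∀ i, f i (T w) = 0 := by
  classical
  -- get u : Fin (k+1) → U with T ∘ u linearly independent
  have hle : k + 1 ≤ Module.finrank K (LinearMap.range T) := hlt
  let bR := Module.finBasis K (LinearMap.range T)
  have hyli : LinearIndependent K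
      (fun i : Fin (k+1) => ((bR (Fin.castLE hle i) : LinearMap.range T) : V)) := by
    have h1 : LinearIndependent K (fun i : Fin (k+1) => bR (Fin.castLE hle i)) :=
      bR.linearIndependent.comp _ (Fin.castLE_injective hle)
    exact h1.map' (LinearMap.range T).subtype (Submodule.ker_subtype _)
  have hchoice : ∀ i : Fin (k+1), ∃ u : U,
      T u = ((bR (Fin.castLE hle i) : LinearMap.range T) : V) := by
    intro i
    exact (bR (Fin.castLE hle i)).2
  choose u hu using hchoice
  have huli : LinearIndependent K (fun i : Fin (k+1) => T (u i)) := by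
    have : (fun i : Fin (k+1) => T (u i)) =
        (fun i : Fin (k+1) => ((bR (Fin.castLE hle i) : LinearMap.range T) : V)) := by
      funext i; exact hu i
    rw [this]; exact hyli
  obtain ⟨g, hg⟩ := exists_dual_family huli
  -- the generic construction
  have key : ∀ (h : Fin k → Fin (k+1)) (p : Fin (k+1)), Function.Injective h →
      (∀ i, h i ≠ p) → (g p (T w) ≠ 0 ∨ ∀ i, g (h i) (T w) = 0) →
      ∃ (v : Fin k → U) (f : Fin k → (V →ₗ[K] K)),
        (∀ i j, f i (T (v j)) = if i = j then 1 else 0) ∧ ∀ i, f i (T w) = 0 := by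
    intro h p hinj hne hcond
    refine ⟨fun j => u (h j),
      fun i => g (h i) -
        (if g p (T w) = 0 then 0 else g (h i) (T w) / g p (T w)) • g p, ?_, ?_⟩
    · intro i j
      simp only [LinearMap.sub_apply, LinearMap.smul_apply, smul_eq_mul]
      rw [hg (h i) (h j), hg p (h j),
        if_neg (show ¬(p = h j) from fun e => hne j e.symm), mul_zero, sub_zero]
      by_cases hij : i = j
      · subst hij; simp
      · rw [if_neg hij, if_neg (fun e => hij (hinj e))]
    · intro i
      simp only [LinearMap.sub_apply, LinearMap.smul_apply, smul_eq_mul]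
      by_cases hd : g p (T w) = 0
      · rw [if_pos hd, zero_mul, sub_zero]
        rcases hcond with hcond | hcond
        · exact absurd hd hcond
        · exact hcond i
      · rw [if_neg hd, div_mul_cancel₀ _ hd, sub_self]
  by_cases hc : ∀ i : Fin k, g i.castSucc (T w) = 0
  · exact key Fin.castSucc (Fin.last k) (Fin.castSucc_injective k)
      (fun i => (Fin.castSucc_lt_last i).ne) (Or.inr hc)
  · push_neg at hc
    obtain ⟨j₀, hj₀⟩ := hc
    refine key (fun i => if i = j₀ then Fin.last k else i.castSucc) j₀.castSucc ?_ ?_ (Or.inl hj₀)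
    · intro a b hab
      dsimp only at hab
      by_cases ha : a = j₀ <;> by_cases hb : b = j₀
      · rw [ha, hb]
      · rw [if_pos ha, if_neg hb] at hab
        exact absurd hab.symm (Fin.castSucc_lt_last b).ne
      · rw [if_neg ha, if_pos hb] at hab
        exact absurd hab (Fin.castSucc_lt_last a).ne
      · rw [if_neg ha, if_neg hb] at hab
        exact Fin.castSucc_injective k hab
    · intro i
      by_cases hi : i = j₀
      · rw [if_pos hi]
        exact (Fin.castSucc_lt_last j₀).ne'
      · rw [if_neg hi]
        exact fun e => hi (Fin.castSucc_injective k e)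

/-- If `0 < k < rank T`, the span of the image of `K_T` is all of `U`. -/
theorem paperKT_span_eq_top {K U V : Type*} [Field K] [CharZero K]
    [AddCommGroup U] [Module K U] [FiniteDimensional K U]
    [AddCommGroup V] [Module K V] [FiniteDimensional K V]
    (T : U →ₗ[K] V) (k : ℕ) (hk : 0 < k)
    (hlt : k < Module.finrank K (LinearMap.range T)) :
    Submodule.span K
      {u : U | ∃ (f : Fin k → (V →ₗ[K] K)) (v : Fin (k + 1) → U), u = paperKT T k f v} = ⊤ := by
  rw [eq_top_iff]
  intro w _
  obtain ⟨v, f, hf, hw⟩ := exists_adapted T k hlt w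
  have : w = paperKT T k f (Fin.snoc v w) := (paperKT_snoc_eq T f v w hf hw).symm
  exact Submodule.subset_span ⟨f, Fin.snoc v w, this⟩
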